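/- Consider the 3-dimensional Lie algebra with basis ξ, E1, E2 and brackets [E1,E2]=0, [ξ,E1]=−(μ/2)E1+εE2, [ξ,E2]=−εκE1+(μ/2)E2 with ε=±1 and pseudo-metric g(ξ,ξ)=1, g(E1,E2)=1 (other basis products zero). Then the Levi-Civita connection satisfies ∇_ξξ=0, ∇_ξE1=−(μ/2)E1, ∇_ξE2=(μ/2)E2, ∇_{E1}ξ=−εE2, ∇_{E1}E1=εξ, ∇_{E1}E2=0, ∇_{E2}ξ=εκE1, ∇_{E2}E1=0, ∇_{E2}E2=−εκξ, and the curvature satisfies R(X,Y)ξ = κ(η(Y)X−η(X)Y) + μ(η(Y)hX−η(X)hY), where hξ=0, hE1=εE2, hE2=εκE1. -/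
import Mathlib


noncomputable section

def ξ : Fin 3 → ℝ := ![1, 0, 0]
def E1 : Fin 3 → ℝ := ![0, 1, 0]
def E2 : Fin 3 → ℝ := ![0, 0, 1]

/-- Artin (pseudo-Riemannian) metric: g(ξ,ξ) = 1, g(E1,E2) = 1, other products zero. -/
def ip (x y : Fin 3 → ℝ) : ℝ := x 0 * y 0 + x 1 * y 2 + x 2 * y 1

/-- Bracket [E1,E2] = 0, [ξ,E1] = −(μ/2)E1 + εE2, [ξ,E2] = −εκE1 + (μ/2)E2. -/
def br (κ μ ε : ℝ) (x y : Fin 3 → ℝ) : Fin 3 → ℝ :=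
  (x 0 * y 1 - x 1 * y 0) • ![0, -(μ / 2), ε] +
  (x 0 * y 2 - x 2 * y 0) • ![0, -(ε * κ), μ / 2]

/-- η dual to ξ. -/
def η (x : Fin 3 → ℝ) : ℝ := x 0

/-- h: hξ = 0, hE1 = εE2, hE2 = εκE1. -/
def h (κ ε : ℝ) (x : Fin 3 → ℝ) : Fin 3 → ℝ := ![0, ε * κ * x 2, ε * x 1]

/-- Explicit formula for the Levi-Civita connection. -/
def N (κ μ ε : ℝ) (x y : Fin 3 → ℝ) : Fin 3 → ℝ :=
  ![ε * x 1 * y 1 - ε * κ * x 2 * y 2,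
    -(μ / 2) * x 0 * y 1 + ε * κ * x 2 * y 0,
    -ε * x 1 * y 0 + μ / 2 * x 0 * y 2]

/-- The model Lie algebra of three-dimensional almost paracosymplectic (κ,μ)-spaces:
the Levi-Civita connection has the stated coefficients and the curvature satisfies
R(X,Y)ξ = κ(η(Y)X − η(X)Y) + μ(η(Y)hX − η(X)hY). -/
theorem paracosymplectic_model (κ μ ε : ℝ) (hε : ε = 1 ∨ ε = -1)
    (nabla : (Fin 3 → ℝ) → (Fin 3 → ℝ) → (Fin 3 → ℝ))
    (hK : ∀ X Y Z, 2 * ip (nabla X Y) Z =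
      ip (br κ μ ε X Y) Z - ip (br κ μ ε Y Z) X + ip (br κ μ ε Z X) Y)
    (R : (Fin 3 → ℝ) → (Fin 3 → ℝ) → (Fin 3 → ℝ) → (Fin 3 → ℝ))
    (hR : ∀ X Y Z, R X Y Z =
      nabla X (nabla Y Z) - nabla Y (nabla X Z) - nabla (br κ μ ε X Y) Z) :
    (nabla ξ ξ = 0 ∧
     nabla ξ E1 = -(μ / 2) • E1 ∧
     nabla ξ E2 = (μ / 2) • E2 ∧
     nabla E1 ξ = -ε • E2 ∧
     nabla E1 E1 = ε • ξ ∧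
     nabla E1 E2 = 0 ∧
     nabla E2 ξ = (ε * κ) • E1 ∧
     nabla E2 E1 = 0 ∧
     nabla E2 E2 = -(ε * κ) • ξ) ∧
    (∀ X Y, R X Y ξ =
      κ • (η Y • X - η X • Y) + μ • (η Y • h κ ε X - η X • h κ ε Y)) := by
  have key : ∀ X Y, nabla X Y = N κ μ ε X Y := by
    intro X Y
    funext i
    fin_cases i
    · have h0 := hK X Y ξ
      simp [ip, ξ, br, N, Matrix.smul_cons] at h0 ⊢
      ring_nf at h0 ⊢
      linarith
    · have h1 := hK X Y E2
      simp [ip, ξ, E2, br, N, Matrix.smul_cons] at h1 ⊢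
      ring_nf at h1 ⊢
      linarith
    · have h2 := hK X Y E1
      simp [ip, ξ, E1, br, N, Matrix.smul_cons] at h2 ⊢
      ring_nf at h2 ⊢
      linarith
  have hε2 : ε * ε = 1 := by rcases hε with rfl | rfl <;> norm_num
  constructor
  · refine ⟨?_, ?_, ?_, ?_, ?_, ?_, ?_, ?_, ?_⟩ <;>
      simp [key, N, ξ, E1, E2] <;> funext i <;> fin_cases i <;> simp <;> ring
  · intro X Y
    rw [hR]
    rcases hε with rfl | rfl <;> funext i <;> fin_cases i <;>
      simp [key, N, ξ, η, h, br, Matrix.smul_cons] <;> ring
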